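/- Let X and Y be real normed spaces, and equip X × Y with the norm ‖(x,y)‖ = max{‖x‖, ‖y‖}. If (x,y) ∈ X × Y satisfies ‖x‖ > ‖y‖, then the positive part of (x,y) equals x⁺ × Y, i.e., (x₁,y₁) satisfies ‖(x,y) + λ(x₁,y₁)‖ ≥ ‖(x,y)‖ for all λ ≥ 0 if and only if ‖x + λx₁‖ ≥ ‖x‖ for all λ ≥ 0. -/

import Mathlib

/-- Positive part: `u ∈ x⁺` iff `‖x + λu‖ ≥ ‖x‖` for all `λ ≥ 0`. -/
def posPart {X : Type*} [NormedAddCommGroup X] [NormedSpace ℝ X] (x u : X) : Prop :=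
  ∀ l : ℝ, 0 ≤ l → ‖x + l • u‖ ≥ ‖x‖

/-- Convexity: if the norm inequality holds at one small positive `l₀ ≤ l`, it holds at `l`. -/
lemma posPart_extend {X : Type*} [NormedAddCommGroup X] [NormedSpace ℝ X]
    (x u : X) (l₀ l : ℝ) (h0 : 0 < l₀) (hle : l₀ ≤ l)
    (hl0 : ‖x‖ ≤ ‖x + l₀ • u‖) : ‖x‖ ≤ ‖x + l • u‖ := by
  have hl : 0 < l := lt_of_lt_of_le h0 hle
  set t : ℝ := l₀ / l with ht
  have ht0 : 0 < t := div_pos h0 hl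
  have ht1 : t ≤ 1 := (div_le_one hl).2 hle
  have key : x + l₀ • u = (1 - t) • x + t • (x + l • u) := by
    have : t * l = l₀ := by rw [ht, div_mul_cancel₀ _ hl.ne']
    rw [smul_add, smul_smul, this]
    module
  have hnorm : ‖x + l₀ • u‖ ≤ (1 - t) * ‖x‖ + t * ‖x + l • u‖ := by
    rw [key]
    calc ‖(1 - t) • x + t • (x + l • u)‖ ≤ ‖(1 - t) • x‖ + ‖t • (x + l • u)‖ :=
          norm_add_le _ _
      _ = (1 - t) * ‖x‖ + t * ‖x + l • u‖ := by
          rw [norm_smul, norm_smul, Real.norm_of_nonneg (by linarith),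
            Real.norm_of_nonneg ht0.le]
  nlinarith [hl0]

/-- If `‖x‖ > ‖y‖` then `(x,y)⁺ = x⁺ × Y` in the max-norm product. -/
theorem statement0 {X Y : Type*} [NormedAddCommGroup X] [NormedSpace ℝ X]
    [NormedAddCommGroup Y] [NormedSpace ℝ Y]
    (x : X) (y : Y) (h : ‖x‖ > ‖y‖) (x₁ : X) (y₁ : Y) :
    posPart ((x, y) : X × Y) (x₁, y₁) ↔ posPart x x₁ := by
  have hmax : ‖((x, y) : X × Y)‖ = ‖x‖ := by
    simp [Prod.norm_def, max_eq_left h.le]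
  constructor
  · intro H l hl
    rcases eq_or_lt_of_le hl with rfl | hl
    · simp
    -- choose small l₀
    set ε : ℝ := (‖x‖ - ‖y‖) / (2 * (‖y₁‖ + 1)) with hε
    have hεpos : 0 < ε := by
      apply div_pos (by linarith)
      positivity
    set l₀ : ℝ := min l ε with hl₀
    have hl₀pos : 0 < l₀ := lt_min hl hεpos
    have hy : ‖y + l₀ • y₁‖ < ‖x‖ := by
      have h1 : ‖y + l₀ • y₁‖ ≤ ‖y‖ + l₀ * ‖y₁‖ := by
        calc ‖y + l₀ • y₁‖ ≤ ‖y‖ + ‖l₀ • y₁‖ := norm_add_le _ _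
          _ = ‖y‖ + l₀ * ‖y₁‖ := by rw [norm_smul, Real.norm_of_nonneg hl₀pos.le]
      have h2 : l₀ * ‖y₁‖ ≤ ε * (‖y₁‖ + 1) := by
        have := min_le_right l ε
        nlinarith [norm_nonneg y₁, hεpos]
      have h3 : ε * (‖y₁‖ + 1) = (‖x‖ - ‖y‖) / 2 := by
        rw [hε]; field_simp
      linarith
    have hH := H l₀ hl₀pos.le
    rw [hmax] at hH
    have hx0 : ‖x‖ ≤ ‖x + l₀ • x₁‖ := by
      have : ‖((x, y) : X × Y) + l₀ • (x₁, y₁)‖ = max ‖x + l₀ • x₁‖ ‖y + l₀ • y₁‖ := by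
        simp [Prod.norm_def, Prod.smul_mk]
      rw [this] at hH
      rcases max_cases ‖x + l₀ • x₁‖ ‖y + l₀ • y₁‖ with ⟨he, _⟩ | ⟨he, _⟩ <;>
        rw [he] at hH
      · exact hH
      · linarith
    exact posPart_extend x x₁ l₀ l hl₀pos (min_le_left l ε) hx0
  · intro H l hl
    have := H l hl
    have : ‖((x, y) : X × Y) + l • (x₁, y₁)‖ = max ‖x + l • x₁‖ ‖y + l • y₁‖ := by
      simp [Prod.norm_def, Prod.smul_mk]
    rw [hmax, this]
    exact le_max_of_le_left (H l hl)
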